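/- Let D be a self-adjoint operator on H and a ∈ B(H). If for every pair of vectors μ, ν ∈ H the function t ↦ ⟨e^{itD} a e^{-itD} μ, ν⟩ is differentiable at t = 0, then sup_{t ≠ 0} ‖(e^{itD} a e^{-itD} − a)/t‖ < ∞ (a is D-Lipschitz). -/
import Mathlib


open Complex Filter Topology MeasureTheory
open scoped Topology

local notation "⟪" x ", " y "⟫" => @inner ℂ _ _ x y

variable {H : Type*} [NormedAddCommGroup H] [InnerProductSpace ℂ H] [CompleteSpace H]

/-- `b` is the bounded operator implementing the commutator form
`(ξ, η) ↦ ⟨aξ, Dη⟩ − ⟨aDξ, η⟩` on `dom D × dom D`; i.e. `a` is weakly `D`-differentiable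
with derivative `wD(a) = b`. -/
def IsWeakDeriv (D : H →ₗ.[ℂ] H) (a b : H →L[ℂ] H) : Prop :=
  ∀ ξ η : D.domain, ⟪b (ξ : H), (η : H)⟫ = ⟪a (ξ : H), D η⟫ - ⟪a (D ξ), (η : H)⟫

/-- `conjAd U t a = U t ∘ a ∘ U (−t)`, i.e. `α_t(a) = e^{itD} a e^{-itD}`. -/
noncomputable def conjAd (U : ℝ → H →L[ℂ] H) (t : ℝ) (a : H →L[ℂ] H) : H →L[ℂ] H :=
  (U t).comp (a.comp (U (-t)))

/-- `U` is the strongly continuous one-parameter unitary group `t ↦ e^{itD}`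
generated by the self-adjoint operator `D` (Stone's theorem characterization). -/
structure IsStoneGroupOf (D : H →ₗ.[ℂ] H) (U : ℝ → H →L[ℂ] H) : Prop where
  map_zero : U 0 = 1
  map_add : ∀ s t : ℝ, U (s + t) = (U s).comp (U t)
  isometry : ∀ (t : ℝ) (ξ : H), ‖U t ξ‖ = ‖ξ‖
  hasDerivAt : ∀ ξ : D.domain, HasDerivAt (fun t : ℝ => U t (ξ : H)) (Complex.I • D ξ) 0
  mem_domain : ∀ ξ v : H, HasDerivAt (fun t : ℝ => U t ξ) v 0 → ξ ∈ D.domain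

/-- If for all vectors `μ, ν` the function `t ↦ ⟨α_t(a) μ, ν⟩` is differentiable at `0`,
then `a` is `D`-Lipschitz: `sup_{t ≠ 0} ‖(α_t(a) − a)/t‖ < ∞`. -/
theorem lipschitz_of_weak_matrix_coefficients_differentiable
    (D : H →ₗ.[ℂ] H) (hD : IsSelfAdjoint D)
    (U : ℝ → H →L[ℂ] H) (hU : IsStoneGroupOf D U)
    (a : H →L[ℂ] H)
    (hdiff : ∀ μ ν : H, ∃ L : ℂ,
      HasDerivAt (fun t : ℝ => ⟪ν, (conjAd U t a) μ⟫) L 0) :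
    ∃ c : ℝ, ∀ t : ℝ, t ≠ 0 → ‖conjAd U t a - a‖ ≤ c * |t| := by
  -- norm bound for conjAd
  have hnorm : ∀ (t : ℝ) (ξ : H), ‖conjAd U t a ξ‖ ≤ ‖a‖ * ‖ξ‖ := by
    intro t ξ
    simp only [conjAd, ContinuousLinearMap.comp_apply]
    rw [hU.isometry]
    calc ‖a (U (-t) ξ)‖ ≤ ‖a‖ * ‖U (-t) ξ‖ := a.le_opNorm _
      _ = ‖a‖ * ‖ξ‖ := by rw [hU.isometry]
  have h0 : conjAd U 0 a = a := by
    ext ξ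
    simp [conjAd, hU.map_zero]
  set B : {t : ℝ // t ≠ 0} → H →L[ℂ] H :=
    fun t => ((t.1 : ℝ) : ℂ)⁻¹ • (conjAd U t.1 a - a) with hB
  -- Step A: matrix coefficients of B are pointwise bounded
  have stepA : ∀ μ ν : H, ∃ C, ∀ t : {t : ℝ // t ≠ 0}, ‖⟪ν, B t μ⟫‖ ≤ C := by
    intro μ ν
    obtain ⟨L, hL⟩ := hdiff μ ν
    set f : ℝ → ℂ := fun t => ⟪ν, conjAd U t a μ⟫ with hf
    have hslope := hasDerivAt_iff_tendsto_slope.mp hL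
    rw [Metric.tendsto_nhdsWithin_nhds] at hslope
    obtain ⟨δ, hδ, hδ'⟩ := hslope 1 one_pos
    refine ⟨max (‖L‖ + 1) (δ⁻¹ * (2 * (‖ν‖ * (‖a‖ * ‖μ‖)))), fun t => ?_⟩
    have hnv : ‖⟪ν, B t μ⟫‖ = |t.1|⁻¹ * ‖f t.1 - f 0‖ := by
      have hval : ⟪ν, B t μ⟫ = ((t.1 : ℝ) : ℂ)⁻¹ * (f t.1 - f 0) := by
        simp [hB, hf, inner_smul_right, inner_sub_right, h0]
      rw [hval, norm_mul, norm_inv, Complex.norm_real, Real.norm_eq_abs]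
    have hfb : ∀ s : ℝ, ‖f s‖ ≤ ‖ν‖ * (‖a‖ * ‖μ‖) := by
      intro s
      calc ‖f s‖ ≤ ‖ν‖ * ‖conjAd U s a μ‖ := norm_inner_le_norm _ _
        _ ≤ ‖ν‖ * (‖a‖ * ‖μ‖) := by
            exact mul_le_mul_of_nonneg_left (hnorm s μ) (norm_nonneg _)
    rcases lt_or_ge |t.1| δ with hlt | hge
    · have hd : dist (slope f 0 t.1) L < 1 := by
        apply hδ' t.2
        simpa [Real.dist_eq] using hlt
      have hsl : ‖slope f 0 t.1‖ = |t.1|⁻¹ * ‖f t.1 - f 0‖ := by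
        rw [slope_def_module, sub_zero, norm_smul, norm_inv, Real.norm_eq_abs]
      have : ‖slope f 0 t.1‖ ≤ ‖L‖ + 1 := by
        have h1 : ‖slope f 0 t.1 - L‖ < 1 := by rwa [← dist_eq_norm]
        have h2 := norm_sub_norm_le (slope f 0 t.1) L
        linarith
      rw [hnv, ← hsl]
      exact le_max_of_le_left this
    · rw [hnv]
      refine le_max_of_le_right ?_
      have h1 : |t.1|⁻¹ ≤ δ⁻¹ := inv_anti₀ hδ hge
      have h2 : ‖f t.1 - f 0‖ ≤ 2 * (‖ν‖ * (‖a‖ * ‖μ‖)) := by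
        calc ‖f t.1 - f 0‖ ≤ ‖f t.1‖ + ‖f 0‖ := norm_sub_le _ _
          _ ≤ 2 * (‖ν‖ * (‖a‖ * ‖μ‖)) := by
              have := hfb t.1; have := hfb 0; linarith
      exact mul_le_mul h1 h2 (norm_nonneg _) (by positivity)
  -- Step B: first Banach–Steinhaus, pointwise boundedness of B
  have stepB : ∀ μ : H, ∃ C, ∀ t : {t : ℝ // t ≠ 0}, ‖B t μ‖ ≤ C := by
    intro μ
    obtain ⟨C, hC⟩ := banach_steinhaus
      (g := fun t : {t : ℝ // t ≠ 0} => innerSL ℂ (B t μ)) (fun ν => by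
        obtain ⟨C, hC⟩ := stepA μ ν
        refine ⟨C, fun t => ?_⟩
        have heq : ‖(innerSL ℂ (B t μ)) ν‖ = ‖⟪ν, B t μ⟫‖ := by
          rw [innerSL_apply_apply, ← inner_conj_symm, RCLike.norm_conj]
        rw [heq]; exact hC t)
    exact ⟨C, fun t => le_of_eq_of_le (innerSL_apply_norm (𝕜 := ℂ) (B t μ)).symm (hC t)⟩
  -- Step C: second Banach–Steinhaus
  obtain ⟨c, hc⟩ := banach_steinhaus stepB
  refine ⟨c, fun t ht => ?_⟩
  have h1 : ‖B ⟨t, ht⟩‖ ≤ c := hc ⟨t, ht⟩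
  have h2 : ‖B ⟨t, ht⟩‖ = |t|⁻¹ * ‖conjAd U t a - a‖ := by
    rw [hB, norm_smul, norm_inv, Complex.norm_real, Real.norm_eq_abs]
  have ht' : (0:ℝ) < |t| := abs_pos.mpr ht
  have : ‖conjAd U t a - a‖ = |t| * ‖B ⟨t, ht⟩‖ := by
    rw [h2]; field_simp
  rw [this, mul_comm c |t|]
  exact mul_le_mul_of_nonneg_left h1 (le_of_lt ht')
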